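/- Suppose continuous nonnegative functions X, Y on an interval [T_i, T_{i+1}] satisfy X(T) ≤ A + C·X(T)·Y(T) and Y(T) ≤ B·N^{−ε₃} + C·Y(T)² + C·N^{−ε₁}·X(T) for all T, with X(T_i) ≤ A, Y(T_i) ≤ B·N^{−ε₃} at the left endpoint, where A, B, C, ε₁, ε₃ > 0 are constants. Then there exists N₀ (depending only on A, B, C, ε₁, ε₃) such that for N ≥ N₀: X(T) ≤ 2A and Y(T) ≤ 2(B·N^{−ε₃} + C·N^{−ε₁}·2A) for all T ∈ [T_i, T_{i+1}]. -/

import Mathlib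

open Set Real

/-- **continuity/bootstrap argument.** If continuous nonnegative `X, Y` on
`[T_i, T_{i+1}]` satisfy `X ≤ A + C·X·Y` and `Y ≤ B·N^{−ε₃} + C·Y² + C·N^{−ε₁}·X`, with
`X(T_i) ≤ A`, `Y(T_i) ≤ B·N^{−ε₃}`, then for `N ≥ N₀` (with `N₀` depending only on
`A, B, C, ε₁, ε₃`): `X ≤ 2A` and `Y ≤ 2(B·N^{−ε₃} + C·N^{−ε₁}·2A)` throughout. -/
theorem statement18 (A B C ε₁ ε₃ : ℝ)
    (hA : 0 < A) (hB : 0 < B) (hC : 0 < C) (hε₁ : 0 < ε₁) (hε₃ : 0 < ε₃) :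
    ∃ N₀ : ℝ, 1 ≤ N₀ ∧
    ∀ N : ℝ, N₀ ≤ N →
    ∀ (Ti Ti1 : ℝ), Ti ≤ Ti1 →
    ∀ X Y : ℝ → ℝ,
      ContinuousOn X (Icc Ti Ti1) → ContinuousOn Y (Icc Ti Ti1) →
      (∀ T ∈ Icc Ti Ti1, 0 ≤ X T) → (∀ T ∈ Icc Ti Ti1, 0 ≤ Y T) →
      (∀ T ∈ Icc Ti Ti1, X T ≤ A + C * X T * Y T) →
      (∀ T ∈ Icc Ti Ti1, Y T ≤ B * N ^ (-ε₃) + C * (Y T) ^ 2 + C * N ^ (-ε₁) * X T) →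
      X Ti ≤ A → Y Ti ≤ B * N ^ (-ε₃) →
      ∀ T ∈ Icc Ti Ti1,
        X T ≤ 2 * A ∧ Y T ≤ 2 * (B * N ^ (-ε₃) + C * N ^ (-ε₁) * (2 * A)) := by
  refine ⟨max 1 (max ((12*B*C) ^ (ε₃⁻¹)) ((24*A*C^2) ^ (ε₁⁻¹))), le_max_left _ _, ?_⟩
  intro N hN Ti Ti1 hTT X Y hXc hYc hX0 hY0 hXineq hYineq hXi hYi
  have hN1 : (1:ℝ) ≤ N := le_trans (le_max_left _ _) hN
  have hNpos : (0:ℝ) < N := lt_of_lt_of_le one_pos hN1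
  have hNe3 : 0 < N ^ (-ε₃) := Real.rpow_pos_of_pos hNpos _
  have hNe1 : 0 < N ^ (-ε₁) := Real.rpow_pos_of_pos hNpos _
  obtain ⟨M, hM⟩ : ∃ M : ℝ, M = B * N ^ (-ε₃) + C * N ^ (-ε₁) * (2 * A) := ⟨_, rfl⟩
  have hMpos : 0 < M := by rw [hM]; positivity
  -- smallness from choice of N₀
  have hNε3 : (0:ℝ) < N ^ ε₃ := Real.rpow_pos_of_pos hNpos _
  have hNε1 : (0:ℝ) < N ^ ε₁ := Real.rpow_pos_of_pos hNpos _
  have hb3 : (0:ℝ) < 12*B*C := by positivity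
  have hb1 : (0:ℝ) < 24*A*C^2 := by positivity
  have key3 : 12*B*C ≤ N ^ ε₃ := by
    have h := le_trans (le_trans (le_max_left ((12*B*C) ^ (ε₃⁻¹)) _)
      (le_max_right (1:ℝ) _)) hN
    have := Real.rpow_le_rpow (Real.rpow_pos_of_pos hb3 _).le h hε₃.le
    rwa [Real.rpow_inv_rpow hb3.le (ne_of_gt hε₃)] at this
  have key1 : 24*A*C^2 ≤ N ^ ε₁ := by
    have h := le_trans (le_trans (le_max_right ((12*B*C) ^ (ε₃⁻¹)) _)
      (le_max_right (1:ℝ) _)) hN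
    have := Real.rpow_le_rpow (Real.rpow_pos_of_pos hb1 _).le h hε₁.le
    rwa [Real.rpow_inv_rpow hb1.le (ne_of_gt hε₁)] at this
  have h3 : C * (B * N ^ (-ε₃)) ≤ 1/12 := by
    rw [Real.rpow_neg hNpos.le]
    rw [show C * (B * (N ^ ε₃)⁻¹) = (B*C) / (N ^ ε₃) by field_simp,
      div_le_div_iff₀ hNε3 (by norm_num : (0:ℝ) < 12)]
    linarith
  have h1 : C * (C * N ^ (-ε₁) * (2*A)) ≤ 1/12 := by
    rw [Real.rpow_neg hNpos.le]
    rw [show C * (C * (N ^ ε₁)⁻¹ * (2*A)) = (2*A*C^2) / (N ^ ε₁) by field_simp,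
      div_le_div_iff₀ hNε1 (by norm_num : (0:ℝ) < 12)]
    linarith
  have hCM : C * M ≤ 1/6 := by
    have : C * M = C * (B * N ^ (-ε₃)) + C * (C * N ^ (-ε₁) * (2*A)) := by rw [hM]; ring
    linarith
  -- improvement step: weak bounds imply strict bounds
  have key : ∀ T ∈ Icc Ti Ti1, X T ≤ 2*A → Y T ≤ 2*M → X T < 2*A ∧ Y T < 2*M := by
    intro T hT hX2 hY2
    have h1' := hXineq T hT
    have h2' := hYineq T hT
    have hx0 := hX0 T hT
    have hy0 := hY0 T hT
    have hq : (Y T)^2 ≤ (2*M) * Y T := by nlinarith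
    have hx : C * N ^ (-ε₁) * X T ≤ C * N ^ (-ε₁) * (2*A) :=
      mul_le_mul_of_nonneg_left hX2 (by positivity)
    have hCMy : C * M * Y T ≤ (1/6) * Y T := mul_le_mul_of_nonneg_right hCM hy0
    have hc2 : C * (Y T)^2 ≤ C * ((2*M) * Y T) := mul_le_mul_of_nonneg_left hq hC.le
    have hid : C * ((2*M) * Y T) = 2 * (C * M * Y T) := by ring
    have hY32 : Y T ≤ 3/2 * M := by
      have e1 : Y T ≤ M + 2 * (C * M * Y T) := by linarith only [h2', hc2, hx, hM, hid]
      linarith only [e1, hCMy, hy0]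
    have hYlt : Y T < 2*M := by linarith
    have ha : C * X T * Y T ≤ C * X T * (3/2*M) :=
      mul_le_mul_of_nonneg_left hY32 (by positivity)
    have hb : C * X T * (3/2*M) ≤ C * (2*A) * (3/2*M) :=
      mul_le_mul_of_nonneg_right (mul_le_mul_of_nonneg_left hX2 hC.le) (by positivity)
    have hcid : C * (2*A) * (3/2*M) = 3*A*(C*M) := by ring
    have hd : 3*A*(C*M) ≤ 3*A*(1/6) := mul_le_mul_of_nonneg_left hCM (by positivity)
    have hCXY : C * X T * Y T ≤ A / 2 := by linarith
    exact ⟨by linarith, hYlt⟩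
  -- topology: clopen subset of connected interval
  haveI : PreconnectedSpace (Icc Ti Ti1) := Subtype.preconnectedSpace isPreconnected_Icc
  have hfc : Continuous fun t : Icc Ti Ti1 => X t :=
    continuousOn_iff_continuous_restrict.mp hXc
  have hgc : Continuous fun t : Icc Ti Ti1 => Y t :=
    continuousOn_iff_continuous_restrict.mp hYc
  set K : Set (Icc Ti Ti1) := {t | X t ≤ 2*A ∧ Y t ≤ 2*M} with hK
  have hKc : IsClosed K := by
    rw [hK, setOf_and]
    exact (isClosed_le hfc continuous_const).inter (isClosed_le hgc continuous_const)
  have hKeq : K = {t : Icc Ti Ti1 | X (t:ℝ) < 2*A ∧ Y (t:ℝ) < 2*M} := by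
    ext t
    constructor
    · rintro ⟨h1, h2⟩
      exact key t t.2 h1 h2
    · rintro ⟨h1, h2⟩
      exact ⟨h1.le, h2.le⟩
  have hKo : IsOpen K := by
    rw [hKeq, setOf_and]
    exact (isOpen_lt hfc continuous_const).inter (isOpen_lt hgc continuous_const)
  have hKne : K.Nonempty := by
    refine ⟨⟨Ti, left_mem_Icc.mpr hTT⟩, ?_, ?_⟩
    · simpa using by linarith
    · have : 0 ≤ C * N ^ (-ε₁) * (2*A) := by positivity
      simpa using by linarith
  have hKuniv : K = univ := IsClopen.eq_univ ⟨hKc, hKo⟩ hKne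
  intro T hT
  have hmem : (⟨T, hT⟩ : Icc Ti Ti1) ∈ K := hKuniv ▸ mem_univ _
  have h2M := hmem.2
  rw [hM] at h2M
  exact ⟨hmem.1, h2M⟩
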